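/- Let k be a field of positive characteristic p and let a ∈ A₁(k) be an element of the first Weyl algebra whose total degree n is positive and prime to p (i.e., p does not divide n). Then a does not belong to the center of A₁(k). -/

import Mathlib

private lemma weyl_aux_coeff (k : Type*) [Field k] (A : Type*) [Ring A] [Algebra k A]
    (B : Module.Basis (ℕ × ℕ) k A) (L : A →ₗ[k] A) (φ : ℕ × ℕ → ℕ) (ψ : ℕ × ℕ → ℕ × ℕ)
    (hL : ∀ ij, L (B ij) = (φ ij : k) • B (ψ ij))
    (hinj : ∀ b ij : ℕ × ℕ, ψ b = ψ ij → b ≠ ij → φ ij ≠ 0 → (φ b : k) = 0)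
    (a : A) (hLa : L a = 0)
    (ij : ℕ × ℕ) (hij : ij ∈ (B.repr a).support) (hφ : φ ij ≠ 0) : (φ ij : k) = 0 := by
  set c := B.repr a with hc
  have ha : a = c.sum fun m r => r • B m := by
    conv_lhs => rw [← B.linearCombination_repr a]
    rw [Finsupp.linearCombination_apply]
  have h0 : c.sum (fun m r => (r * (φ m : k)) • B (ψ m)) = 0 := by
    calc c.sum (fun m r => (r * (φ m : k)) • B (ψ m))
        = c.sum (fun m r => L (r • B m)) := by
          refine Finsupp.sum_congr fun m _ => ?_
          rw [map_smul, hL, smul_smul]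
      _ = L (c.sum fun m r => r • B m) := (map_finsuppSum L c _).symm
      _ = L a := by rw [← ha]
      _ = 0 := hLa
  have h1 : c.sum (fun m r => Finsupp.single (ψ m) (r * (φ m : k))) = 0 := by
    have := congrArg B.repr h0
    simpa [map_finsuppSum, map_smul, Module.Basis.repr_self, Finsupp.smul_single,
      smul_eq_mul, mul_one] using this
  have h2 := congrArg (fun f => f (ψ ij)) h1
  simp only [Finsupp.sum_apply, Finsupp.coe_zero, Pi.zero_apply] at h2
  rw [Finsupp.sum, Finset.sum_eq_single ij] at h2
  · rw [Finsupp.single_eq_same] at h2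
    have hcij : c ij ≠ 0 := Finsupp.mem_support_iff.mp hij
    rcases mul_eq_zero.mp h2 with h | h
    · exact absurd h hcij
    · exact h
  · intro b _ hbne
    by_cases hψ : ψ b = ψ ij
    · rw [hψ, Finsupp.single_eq_same, hinj b ij hψ hbne hφ, mul_zero]
    · exact Finsupp.single_eq_of_ne (Ne.symm hψ)
  · intro h; exact absurd hij h

private lemma weyl_d_pow_x (A : Type*) [Ring A] (x d : A) (hxd : d * x - x * d = 1) :
    ∀ m : ℕ, d * x ^ (m + 1) = x ^ (m + 1) * d + (m + 1) • x ^ m := by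
  have hdx : d * x = x * d + 1 := by rw [← hxd]; abel
  intro m
  induction m with
  | zero => simpa using hdx
  | succ m ih =>
    calc d * x ^ (m + 2) = (d * x ^ (m + 1)) * x := by rw [pow_succ, ← mul_assoc]
      _ = (x ^ (m + 1) * d + (m + 1) • x ^ m) * x := by rw [ih]
      _ = x ^ (m + 1) * (d * x) + (m + 1) • (x ^ m * x) := by
          rw [add_mul, smul_mul_assoc, mul_assoc]
      _ = x ^ (m + 2) * d + (m + 2) • x ^ (m + 1) := by
          rw [hdx, mul_add, mul_one, ← mul_assoc, ← pow_succ, ← pow_succ,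
            succ_nsmul (x ^ (m + 1)) (m + 1)]
          abel

private lemma weyl_pow_d_x (A : Type*) [Ring A] (x d : A) (hxd : d * x - x * d = 1) :
    ∀ m : ℕ, d ^ (m + 1) * x = x * d ^ (m + 1) + (m + 1) • d ^ m := by
  have hdx : d * x = x * d + 1 := by rw [← hxd]; abel
  intro m
  induction m with
  | zero => simpa using hdx
  | succ m ih =>
    calc d ^ (m + 2) * x = d * (d ^ (m + 1) * x) := by rw [pow_succ', mul_assoc]
      _ = d * (x * d ^ (m + 1) + (m + 1) • d ^ m) := by rw [ih]
      _ = (d * x) * d ^ (m + 1) + (m + 1) • (d * d ^ m) := by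
          rw [mul_add, mul_smul_comm, mul_assoc]
      _ = x * d ^ (m + 2) + (m + 2) • d ^ (m + 1) := by
          rw [hdx, add_mul, one_mul, mul_assoc, ← pow_succ', ← pow_succ',
            succ_nsmul (d ^ (m + 1)) (m + 1)]
          abel

/-- Let `k` be a field of positive characteristic `p` and `A` the first Weyl algebra over
`k` (generators `x`, `d` with `d * x - x * d = 1` and `k`-basis the monomials
`x ^ i * d ^ j`).  If `a ∈ A` has total degree `n` (the maximum of `i + j` over the
monomials `x ^ i * d ^ j` appearing in `a`) with `n` positive and prime to `p`, then `a`
is not central in `A`. -/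
theorem weyl_not_central_of_totalDegree_prime_to_char
    (k : Type*) [Field k] (p : ℕ) (hp : p ≠ 0) [CharP k p]
    (A : Type*) [Ring A] [Algebra k A] (x d : A)
    (hxd : d * x - x * d = 1)
    (B : Module.Basis (ℕ × ℕ) k A) (hB : ∀ ij : ℕ × ℕ, B ij = x ^ ij.1 * d ^ ij.2)
    (a : A) (n : ℕ) (hn : 0 < n) (hpn : ¬ p ∣ n)
    (hdeg : ∃ ij ∈ (B.repr a).support, ij.1 + ij.2 = n)
    (hle : ∀ ij ∈ (B.repr a).support, ij.1 + ij.2 ≤ n) :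
    a ∉ Subring.center A := by
  intro ha
  obtain ⟨ij0, hij0, hijn⟩ := hdeg
  have hcomm : ∀ g : A, g * a = a * g := Subring.mem_center_iff.mp ha
  -- commuting with d
  set L1 : A →ₗ[k] A := LinearMap.mulLeft k d - LinearMap.mulRight k d with hL1def
  have hL1a : L1 a = 0 := by
    simp only [hL1def, LinearMap.sub_apply, LinearMap.mulLeft_apply,
      LinearMap.mulRight_apply, hcomm d, sub_self]
  have hL1 : ∀ ij : ℕ × ℕ, L1 (B ij) = ((ij.1 : ℕ) : k) • B (ij.1 - 1, ij.2) := by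
    rintro ⟨i, j⟩
    simp only [hL1def, LinearMap.sub_apply, LinearMap.mulLeft_apply,
      LinearMap.mulRight_apply, hB]
    cases i with
    | zero => simp [← pow_succ, ← pow_succ']
    | succ i =>
      rw [← mul_assoc, weyl_d_pow_x A x d hxd i, add_mul, smul_mul_assoc,
        mul_assoc, mul_assoc, ← pow_succ', ← pow_succ]
      simp only [Nat.add_sub_cancel, Nat.cast_smul_eq_nsmul]
      exact add_sub_cancel_left _ _
  have hinj1 : ∀ b ij : ℕ × ℕ, (b.1 - 1, b.2) = (ij.1 - 1, ij.2) → b ≠ ij →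
      ij.1 ≠ 0 → ((b.1 : ℕ) : k) = 0 := by
    intro b ij hψ hne hφ
    have h1 : b.1 - 1 = ij.1 - 1 := (Prod.ext_iff.mp hψ).1
    have h2 : b.2 = ij.2 := (Prod.ext_iff.mp hψ).2
    have h3 : b.1 ≠ ij.1 := fun h => hne (Prod.ext h h2)
    have : b.1 = 0 := by omega
    simp [this]
  have hdiv1 : p ∣ ij0.1 := by
    rcases Nat.eq_zero_or_pos ij0.1 with h | h
    · simp [h]
    · have h0 := weyl_aux_coeff k A B L1 (fun ij => ij.1) (fun ij => (ij.1 - 1, ij.2))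
        hL1 hinj1 a hL1a ij0 hij0 h.ne'
      exact (CharP.cast_eq_zero_iff k p _).mp h0
  -- commuting with x
  set L2 : A →ₗ[k] A := LinearMap.mulRight k x - LinearMap.mulLeft k x with hL2def
  have hL2a : L2 a = 0 := by
    simp only [hL2def, LinearMap.sub_apply, LinearMap.mulLeft_apply,
      LinearMap.mulRight_apply, hcomm x, sub_self]
  have hL2 : ∀ ij : ℕ × ℕ, L2 (B ij) = ((ij.2 : ℕ) : k) • B (ij.1, ij.2 - 1) := by
    rintro ⟨i, j⟩
    simp only [hL2def, LinearMap.sub_apply, LinearMap.mulLeft_apply,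
      LinearMap.mulRight_apply, hB]
    cases j with
    | zero => simp [← pow_succ, ← pow_succ']
    | succ j =>
      rw [mul_assoc, weyl_pow_d_x A x d hxd j, mul_add, mul_smul_comm,
        ← mul_assoc, ← mul_assoc, ← pow_succ, ← pow_succ']
      simp only [Nat.add_sub_cancel, Nat.cast_smul_eq_nsmul]
      exact add_sub_cancel_left _ _
  have hinj2 : ∀ b ij : ℕ × ℕ, (b.1, b.2 - 1) = (ij.1, ij.2 - 1) → b ≠ ij →
      ij.2 ≠ 0 → ((b.2 : ℕ) : k) = 0 := by
    intro b ij hψ hne hφ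
    have h1 : b.1 = ij.1 := (Prod.ext_iff.mp hψ).1
    have h2 : b.2 - 1 = ij.2 - 1 := (Prod.ext_iff.mp hψ).2
    have h3 : b.2 ≠ ij.2 := fun h => hne (Prod.ext h1 h)
    have : b.2 = 0 := by omega
    simp [this]
  have hdiv2 : p ∣ ij0.2 := by
    rcases Nat.eq_zero_or_pos ij0.2 with h | h
    · simp [h]
    · have h0 := weyl_aux_coeff k A B L2 (fun ij => ij.2) (fun ij => (ij.1, ij.2 - 1))
        hL2 hinj2 a hL2a ij0 hij0 h.ne'
      exact (CharP.cast_eq_zero_iff k p _).mp h0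
  exact hpn (hijn ▸ Nat.dvd_add hdiv1 hdiv2)
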